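/- Suppose c ∈ L¹[0, 2π] satisfies the four orthogonality conditions ∫_{−π/2}^{π/2} c(φ)·cos φ dφ = ∫_{−π/2}^{π/2} c(φ+π)·cos φ dφ = ∫_{−π/2}^{π/2} c(φ)·sin φ dφ = ∫_{−π/2}^{π/2} c(φ+π)·sin φ dφ = 0 (with c extended 2π-periodically), and let f(x) = ∫₀^{2π} c(φ)·σ(x·cos φ + sin φ) dφ. Then f(x) → 0 as x → +∞ and as x → −∞, f is differentiable everywhere, and x·f′(x) → 0 as x → +∞ and as x → −∞. -/

import Mathlib

open MeasureTheory Real Set Filter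

namespace Stmt12

open Topology intervalIntegral

noncomputable def rt (x : ℝ) : ℝ := Real.sqrt (x ^ 2 + 1)
noncomputable def th (x : ℝ) : ℝ := Real.arccos (x / rt x)
noncomputable def Psi (c : ℝ → ℝ) (t : ℝ) : ℝ := ∫ s in (0:ℝ)..t, |c s|
noncomputable def G (c : ℝ → ℝ) (t : ℝ) : ℝ :=
  ∫ φ in (t - π/2)..(t + π/2), c φ * Real.cos φ
noncomputable def H (c : ℝ → ℝ) (t : ℝ) : ℝ :=
  ∫ φ in (t - π/2)..(t + π/2), c φ * Real.sin φ

lemma rt_pos (x : ℝ) : 0 < rt x := Real.sqrt_pos.2 (by positivity)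

lemma sq_rt (x : ℝ) : rt x ^ 2 = x ^ 2 + 1 := Real.sq_sqrt (by positivity)

lemma abs_le_rt (x : ℝ) : |x| ≤ rt x := by
  rw [← Real.sqrt_sq_eq_abs]; exact Real.sqrt_le_sqrt (by nlinarith)

lemma le_rt (x : ℝ) : x ≤ rt x := (le_abs_self x).trans (abs_le_rt x)

lemma div_mem (x : ℝ) : x / rt x ∈ Icc (-1:ℝ) 1 := by
  have h := abs_le_rt x; have h0 := rt_pos x
  constructor
  · rw [le_div_iff₀ h0]
    have := neg_abs_le x
    linarith
  · rw [div_le_one h0]; exact le_rt x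

lemma cos_th (x : ℝ) : Real.cos (th x) = x / rt x :=
  Real.cos_arccos (div_mem x).1 (div_mem x).2

lemma sin_th (x : ℝ) : Real.sin (th x) = 1 / rt x := by
  rw [th, Real.sin_arccos]
  have h0 := rt_pos x
  have h2 := sq_rt x
  have key : 1 - (x / rt x) ^ 2 = (1 / rt x) ^ 2 := by
    field_simp
    linarith
  rw [key, Real.sqrt_sq (by positivity)]

lemma keyid (x φ : ℝ) : x * Real.cos φ + Real.sin φ = rt x * Real.cos (φ - th x) := by
  rw [Real.cos_sub, cos_th, sin_th]
  have hne : rt x ≠ 0 := (rt_pos x).ne'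
  field_simp

lemma th_nonneg (x : ℝ) : 0 ≤ th x := Real.arccos_nonneg _

lemma th_le_pi (x : ℝ) : th x ≤ π := Real.arccos_le_pi _

lemma th_le_half {x : ℝ} (hx : 0 ≤ x) : th x ≤ π/2 :=
  Real.arccos_le_pi_div_two.2 (div_nonneg hx (rt_pos x).le)

lemma half_le_th {x : ℝ} (hx : x ≤ 0) : π/2 ≤ th x := by
  rw [th, Real.arccos_eq_pi_div_two_sub_arcsin]
  have : Real.arcsin (x / rt x) ≤ 0 :=
    Real.arcsin_nonpos.2 (div_nonpos_of_nonpos_of_nonneg hx (rt_pos x).le)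
  linarith

lemma sin_mono {u t : ℝ} (hu : 0 ≤ u) (hut : u ≤ t) (ht : t ≤ π/2) :
    Real.sin u ≤ Real.sin t := by
  have := Real.pi_pos
  exact Real.strictMonoOn_sin.monotoneOn ⟨by linarith, by linarith⟩ ⟨by linarith, ht⟩ hut

/-- For `0 ≤ θ ≤ π/2` and `u ∈ [0, θ]`, `|sin u| ≤ sin θ`. -/
lemma abs_sin_le_lo {u t : ℝ} (hu : 0 ≤ u) (hut : u ≤ t) (ht : t ≤ π/2) :
    |Real.sin u| ≤ Real.sin t := by
  have := Real.pi_pos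
  rw [abs_of_nonneg (Real.sin_nonneg_of_nonneg_of_le_pi hu (by linarith))]
  exact sin_mono hu hut ht

/-- For `π/2 ≤ θ` and `u ∈ [θ, π]`, `|sin u| ≤ sin θ`. -/
lemma abs_sin_le_hi {u t : ℝ} (h1 : t ≤ u) (h2 : u ≤ π) (h3 : π/2 ≤ t) :
    |Real.sin u| ≤ Real.sin t := by
  have := Real.pi_pos
  have hs : Real.sin u = Real.sin (π - u) := (Real.sin_pi_sub u).symm
  have ht : Real.sin t = Real.sin (π - t) := (Real.sin_pi_sub t).symm
  rw [hs, ht]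
  exact abs_sin_le_lo (by linarith) (by linarith) (by linarith)

lemma intAll {c : ℝ → ℝ} (hper : Function.Periodic c (2 * π))
    (hc : IntervalIntegrable c volume 0 (2 * π)) :
    ∀ a b, IntervalIntegrable c volume a b := by
  have hT : (0:ℝ) < 2 * π := by positivity
  have hblock : ∀ n : ℤ, IntervalIntegrable c volume (n * (2*π)) (n * (2*π) + 2*π) := by
    intro n
    have h := hc.comp_sub_right (n * (2*π))
    have he : (fun x => c (x - n * (2*π))) = c := by
      funext x
      have := hper.sub_zsmul_eq (x := x) n
      simpa [zsmul_eq_mul] using this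
    rw [he] at h
    simpa [zero_add, add_comm] using h
  have hchain : ∀ (m : ℤ) (k : ℕ), IntervalIntegrable c volume (m * (2*π)) ((m + k) * (2*π)) := by
    intro m k
    induction k with
    | zero => simpa using IntervalIntegrable.refl
    | succ k ih =>
        refine ih.trans ?_
        have := hblock (m + k)
        have e1 : ((m : ℝ) + k) * (2*π) + 2*π = ((m + (k+1) : ℤ) : ℝ) * (2*π) := by
          push_cast; ring
        have e0 : (((m + k : ℤ)) : ℝ) * (2*π) = ((m:ℝ) + k) * (2*π) := by push_cast; ring
        rw [e0, e1] at this
        convert this using 2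
        push_cast; ring
  intro a b
  set m : ℤ := ⌊min a b / (2*π)⌋ with hm
  have hmle : (m : ℝ) * (2*π) ≤ min a b := by
    rw [← le_div_iff₀ hT]
    exact Int.floor_le _
  set k : ℕ := ⌈(max a b / (2*π) - m)⌉₊ with hk
  have hkge : a ⊔ b ≤ ((m : ℝ) + k) * (2*π) := by
    have h := Nat.le_ceil ((a ⊔ b) / (2*π) - (m:ℝ))
    have h2 : (a ⊔ b) / (2*π) ≤ (m:ℝ) + k := by
      have : ((⌈(a ⊔ b) / (2*π) - (m:ℝ)⌉₊ : ℕ) : ℝ) = (k : ℝ) := by rw [hk]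
      linarith [this ▸ h]
    calc a ⊔ b = (a ⊔ b)/(2*π) * (2*π) := by field_simp
    _ ≤ ((m:ℝ)+k) * (2*π) := mul_le_mul_of_nonneg_right h2 hT.le
  have hord : (m:ℝ) * (2*π) ≤ ((m:ℝ)+k) * (2*π) := by
    nlinarith [Nat.cast_nonneg (α := ℝ) k]
  refine (hchain m k).mono_set ?_
  intro t ht
  rw [Set.uIcc_of_le hord]
  have ht2 : t ∈ Icc (a ⊓ b) (a ⊔ b) := ht
  exact ⟨le_trans hmle ht2.1, le_trans ht2.2 hkge⟩


section Core

variable {c : ℝ → ℝ}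

lemma intMul (hint : ∀ a b, IntervalIntegrable c volume a b) {g : ℝ → ℝ}
    (hg : Continuous g) (a b : ℝ) :
    IntervalIntegrable (fun φ => c φ * g φ) volume a b :=
  (hint a b).mul_continuousOn hg.continuousOn

lemma psi_sub (hint : ∀ a b, IntervalIntegrable c volume a b) (a b : ℝ) :
    ∫ φ in a..b, |c φ| = Psi c b - Psi c a :=
  (integral_interval_sub_left ((hint 0 b).abs) ((hint 0 a).abs)).symm

lemma psi_cont (hint : ∀ a b, IntervalIntegrable c volume a b) :
    Continuous (Psi c) :=
  intervalIntegral.continuous_primitive (fun a b => (hint a b).abs) 0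

lemma psi_mono (hint : ∀ a b, IntervalIntegrable c volume a b) {a b : ℝ} (hab : a ≤ b) :
    Psi c a ≤ Psi c b := by
  have h := psi_sub hint a b
  have h2 : 0 ≤ ∫ φ in a..b, |c φ| :=
    intervalIntegral.integral_nonneg hab (fun u _ => abs_nonneg _)
  linarith

/-- Main bound: `|∫ₐᵇ c g| ≤ M (Ψ b - Ψ a)` when `|g| ≤ M` on `[a,b]`. -/
lemma boundLem (hint : ∀ a b, IntervalIntegrable c volume a b)
    {g : ℝ → ℝ} (hg : Continuous g) {a b M : ℝ} (hab : a ≤ b)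
    (hM : ∀ φ ∈ Icc a b, |g φ| ≤ M) :
    |∫ φ in a..b, c φ * g φ| ≤ M * (Psi c b - Psi c a) := by
  have h1 : |∫ φ in a..b, c φ * g φ| ≤ ∫ φ in a..b, |c φ * g φ| :=
    intervalIntegral.abs_integral_le_integral_abs hab
  have h2 : ∫ φ in a..b, |c φ * g φ| ≤ ∫ φ in a..b, M * |c φ| := by
    apply intervalIntegral.integral_mono_on hab (intMul hint hg a b).abs
      (((hint a b).abs).const_mul M)
    intro φ hφ
    rw [abs_mul]
    calc |c φ| * |g φ| ≤ |c φ| * M :=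
          mul_le_mul_of_nonneg_left (hM φ hφ) (abs_nonneg _)
    _ = M * |c φ| := mul_comm _ _
  have h3 : ∫ φ in a..b, M * |c φ| = M * (Psi c b - Psi c a) := by
    rw [intervalIntegral.integral_const_mul, psi_sub hint a b]
  linarith

lemma G_eq_sub (hint : ∀ a b, IntervalIntegrable c volume a b) (t : ℝ) :
    G c t = (∫ φ in (0:ℝ)..(t + π/2), c φ * Real.cos φ)
      - ∫ φ in (0:ℝ)..(t - π/2), c φ * Real.cos φ :=
  (integral_interval_sub_left (intMul hint Real.continuous_cos 0 (t + π/2))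
    (intMul hint Real.continuous_cos 0 (t - π/2))).symm

lemma H_eq_sub (hint : ∀ a b, IntervalIntegrable c volume a b) (t : ℝ) :
    H c t = (∫ φ in (0:ℝ)..(t + π/2), c φ * Real.sin φ)
      - ∫ φ in (0:ℝ)..(t - π/2), c φ * Real.sin φ :=
  (integral_interval_sub_left (intMul hint Real.continuous_sin 0 (t + π/2))
    (intMul hint Real.continuous_sin 0 (t - π/2))).symm

lemma G_cont (hint : ∀ a b, IntervalIntegrable c volume a b) : Continuous (G c) := by
  have h : Continuous fun u : ℝ => ∫ φ in (0:ℝ)..u, c φ * Real.cos φ :=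
    intervalIntegral.continuous_primitive (fun a b => intMul hint Real.continuous_cos a b) 0
  have : G c = fun t => (fun u => ∫ φ in (0:ℝ)..u, c φ * Real.cos φ) (t + π/2)
      - (fun u => ∫ φ in (0:ℝ)..u, c φ * Real.cos φ) (t - π/2) :=
    funext fun t => G_eq_sub hint t
  rw [this]
  exact (h.comp (continuous_id.add continuous_const)).sub
    (h.comp (continuous_id.sub continuous_const))

lemma H_cont (hint : ∀ a b, IntervalIntegrable c volume a b) : Continuous (H c) := by
  have h : Continuous fun u : ℝ => ∫ φ in (0:ℝ)..u, c φ * Real.sin φ :=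
    intervalIntegral.continuous_primitive (fun a b => intMul hint Real.continuous_sin a b) 0
  have : H c = fun t => (fun u => ∫ φ in (0:ℝ)..u, c φ * Real.sin φ) (t + π/2)
      - (fun u => ∫ φ in (0:ℝ)..u, c φ * Real.sin φ) (t - π/2) :=
    funext fun t => H_eq_sub hint t
  rw [this]
  exact (h.comp (continuous_id.add continuous_const)).sub
    (h.comp (continuous_id.sub continuous_const))

/-- `G t - G s` as two boundary integrals. -/
lemma G_split (hint : ∀ a b, IntervalIntegrable c volume a b) (s t : ℝ) :
    G c t = G c s + (∫ φ in (s + π/2)..(t + π/2), c φ * Real.cos φ)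
      - ∫ φ in (s - π/2)..(t - π/2), c φ * Real.cos φ := by
  have e1 : ∫ φ in (s + π/2)..(t + π/2), c φ * Real.cos φ
      = (∫ φ in (0:ℝ)..(t + π/2), c φ * Real.cos φ)
        - ∫ φ in (0:ℝ)..(s + π/2), c φ * Real.cos φ :=
    (integral_interval_sub_left (intMul hint Real.continuous_cos 0 (t + π/2))
      (intMul hint Real.continuous_cos 0 (s + π/2))).symm
  have e2 : ∫ φ in (s - π/2)..(t - π/2), c φ * Real.cos φ
      = (∫ φ in (0:ℝ)..(t - π/2), c φ * Real.cos φ)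
        - ∫ φ in (0:ℝ)..(s - π/2), c φ * Real.cos φ :=
    (integral_interval_sub_left (intMul hint Real.continuous_cos 0 (t - π/2))
      (intMul hint Real.continuous_cos 0 (s - π/2))).symm
  have e3 := G_eq_sub hint t
  have e4 := G_eq_sub hint s
  rw [e1, e2, e3, e4]; ring

lemma G_zero (h1 : ∫ φ in (-(π/2))..(π/2), c φ * Real.cos φ = 0) : G c 0 = 0 := by
  rw [G, show (0:ℝ) - π/2 = -(π/2) by ring, show (0:ℝ) + π/2 = π/2 by ring]
  exact h1

lemma H_zero (h3 : ∫ φ in (-(π/2))..(π/2), c φ * Real.sin φ = 0) : H c 0 = 0 := by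
  rw [H, show (0:ℝ) - π/2 = -(π/2) by ring, show (0:ℝ) + π/2 = π/2 by ring]
  exact h3

lemma G_pi (h2 : ∫ φ in (-(π/2))..(π/2), c (φ + π) * Real.cos φ = 0) : G c π = 0 := by
  have key := intervalIntegral.integral_comp_add_right (a := -(π/2)) (b := π/2)
    (fun ψ => c ψ * Real.cos (ψ - π)) π
  -- LHS: ∫ φ in -(π/2)..π/2, c (φ + π) * cos (φ + π - π)
  have lhs : (∫ φ in (-(π/2))..(π/2), c (φ + π) * Real.cos (φ + π - π)) = 0 := by
    rw [← h2]
    apply intervalIntegral.integral_congr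
    intro φ _
    simp [add_sub_cancel_right]
  rw [lhs] at key
  have fneg : (fun ψ => c ψ * Real.cos (ψ - π)) = fun ψ => -(c ψ * Real.cos ψ) := by
    funext ψ; rw [Real.cos_sub_pi]; ring
  rw [fneg, intervalIntegral.integral_neg] at key
  rw [G, show π - π/2 = -(π/2) + π by ring, show π + π/2 = π/2 + π by ring]
  linarith [key]

lemma H_pi (h4 : ∫ φ in (-(π/2))..(π/2), c (φ + π) * Real.sin φ = 0) : H c π = 0 := by
  have key := intervalIntegral.integral_comp_add_right (a := -(π/2)) (b := π/2)
    (fun ψ => c ψ * Real.sin (ψ - π)) π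
  have lhs : (∫ φ in (-(π/2))..(π/2), c (φ + π) * Real.sin (φ + π - π)) = 0 := by
    rw [← h4]
    apply intervalIntegral.integral_congr
    intro φ _
    simp [add_sub_cancel_right]
  rw [lhs] at key
  have fneg : (fun ψ => c ψ * Real.sin (ψ - π)) = fun ψ => -(c ψ * Real.sin ψ) := by
    funext ψ
    rw [show ψ - π = -(π - ψ) by ring, Real.sin_neg, Real.sin_pi_sub]
    ring
  rw [fneg, intervalIntegral.integral_neg] at key
  rw [H, show π - π/2 = -(π/2) + π by ring, show π + π/2 = π/2 + π by ring]
  linarith [key]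

end Core


section Core2

variable {c : ℝ → ℝ}

lemma intRelu (hint : ∀ a b, IntervalIntegrable c volume a b) (y a b : ℝ) :
    IntervalIntegrable (fun φ => c φ * max (y * Real.cos φ + Real.sin φ) 0) volume a b :=
  intMul hint (((continuous_const.mul Real.continuous_cos).add
    Real.continuous_sin).max continuous_const) a b

lemma perRelu (hper : Function.Periodic c (2 * π)) (y : ℝ) :
    Function.Periodic (fun φ => c φ * max (y * Real.cos φ + Real.sin φ) 0) (2 * π) := by
  intro φ
  simp [hper φ, Real.cos_add_two_pi, Real.sin_add_two_pi]

/-- Shifted representation of the defining integral. -/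
lemma shiftRepr (hint : ∀ a b, IntervalIntegrable c volume a b)
    (hper : Function.Periodic c (2 * π)) (y s : ℝ) :
    (∫ φ in (0:ℝ)..(2 * π), c φ * max (y * Real.cos φ + Real.sin φ) 0)
      = ∫ φ in s..(s + 2 * π), c φ * max (y * Real.cos φ + Real.sin φ) 0 := by
  simpa using (perRelu hper y).intervalIntegral_add_eq 0 s

/-- The key representation `f x = x G(θ x) + H(θ x)`. -/
lemma fRepr (hint : ∀ a b, IntervalIntegrable c volume a b)
    (hper : Function.Periodic c (2 * π)) (x : ℝ) :
    (∫ φ in (0:ℝ)..(2 * π), c φ * max (x * Real.cos φ + Real.sin φ) 0)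
      = x * G c (th x) + H c (th x) := by
  have pipos := Real.pi_pos
  set θ := th x with hθ
  have hθ1 : 0 ≤ θ := th_nonneg x
  have hθ2 : θ ≤ π := th_le_pi x
  have hr := rt_pos x
  rw [shiftRepr hint hper x (θ - π/2)]
  have hsplit := intervalIntegral.integral_add_adjacent_intervals
    (intRelu hint x (θ - π/2) (θ + π/2)) (intRelu hint x (θ + π/2) (θ - π/2 + 2*π))
  rw [← hsplit]
  have hpart2 : (∫ φ in (θ + π/2)..(θ - π/2 + 2*π),
      c φ * max (x * Real.cos φ + Real.sin φ) 0) = 0 := by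
    rw [show (∫ φ in (θ + π/2)..(θ - π/2 + 2*π),
        c φ * max (x * Real.cos φ + Real.sin φ) 0)
        = ∫ φ in (θ + π/2)..(θ - π/2 + 2*π), (0:ℝ) from ?_, intervalIntegral.integral_zero]
    apply intervalIntegral.integral_congr
    intro φ hφ
    rw [Set.uIcc_of_le (by linarith)] at hφ
    have hcos : Real.cos (φ - θ) ≤ 0 :=
      Real.cos_nonpos_of_pi_div_two_le_of_le (by linarith [hφ.1]) (by linarith [hφ.2])
    have : x * Real.cos φ + Real.sin φ ≤ 0 := by
      rw [keyid x φ, ← hθ]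
      exact mul_nonpos_of_nonneg_of_nonpos hr.le hcos
    simp [max_eq_right this]
  have hpart1 : (∫ φ in (θ - π/2)..(θ + π/2),
      c φ * max (x * Real.cos φ + Real.sin φ) 0) = x * G c θ + H c θ := by
    have e1 : (∫ φ in (θ - π/2)..(θ + π/2), c φ * max (x * Real.cos φ + Real.sin φ) 0)
        = ∫ φ in (θ - π/2)..(θ + π/2),
            (x * (c φ * Real.cos φ) + c φ * Real.sin φ) := by
      apply intervalIntegral.integral_congr
      intro φ hφ
      rw [Set.uIcc_of_le (by linarith)] at hφ
      have hcos : 0 ≤ Real.cos (φ - θ) :=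
        Real.cos_nonneg_of_mem_Icc ⟨by linarith [hφ.1], by linarith [hφ.2]⟩
      have hpos : 0 ≤ x * Real.cos φ + Real.sin φ := by
        rw [keyid x φ, ← hθ]
        exact mul_nonneg hr.le hcos
      show c φ * max (x * Real.cos φ + Real.sin φ) 0
        = x * (c φ * Real.cos φ) + c φ * Real.sin φ
      rw [max_eq_left hpos]; ring
    rw [e1, intervalIntegral.integral_add
      ((intMul hint Real.continuous_cos _ _).const_mul x)
      (intMul hint Real.continuous_sin _ _), intervalIntegral.integral_const_mul]
    rfl
  rw [hpart1, hpart2, add_zero]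

lemma tendsto_th_top : Tendsto th atTop (𝓝 0) := by
  have h1 : Tendsto (fun x : ℝ => x / rt x) atTop (𝓝 1) := by
    have h0 : Tendsto (fun x : ℝ => (x + 1)⁻¹) atTop (𝓝 0) :=
      (tendsto_atTop_add_const_right atTop 1 tendsto_id).inv_tendsto_atTop
    have hlow : Tendsto (fun x : ℝ => 1 - (x + 1)⁻¹) atTop (𝓝 1) := by
      simpa using tendsto_const_nhds.sub h0
    apply tendsto_of_tendsto_of_tendsto_of_le_of_le' hlow tendsto_const_nhds
    · filter_upwards [eventually_ge_atTop (0:ℝ)] with x hx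
      have h0 := rt_pos x
      have hx1 : (0:ℝ) < x + 1 := by linarith
      have hle : rt x ≤ x + 1 := by
        have h := Real.sqrt_le_sqrt (show x^2 + 1 ≤ (x+1)^2 by nlinarith)
        rw [Real.sqrt_sq (by linarith : (0:ℝ) ≤ x + 1)] at h
        exact h
      have e : 1 - (x+1)⁻¹ = x / (x+1) := by field_simp; ring
      rw [e]
      gcongr
    · filter_upwards with x
      exact (div_le_one (rt_pos x)).2 (le_rt x)
  have h2 : Tendsto Real.arccos (𝓝 1) (𝓝 0) := by
    have := Real.continuous_arccos.tendsto 1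
    rwa [Real.arccos_one] at this
  exact h2.comp h1

lemma tendsto_th_bot : Tendsto th atBot (𝓝 π) := by
  have h1 : Tendsto (fun x : ℝ => x / rt x) atBot (𝓝 (-1)) := by
    have hneg : Tendsto (fun x : ℝ => 1 - x) atBot atTop := by
      exact tendsto_atTop_add_const_left atBot 1 tendsto_neg_atBot_atTop
    have h0 : Tendsto (fun x : ℝ => (1 - x)⁻¹) atBot (𝓝 0) :=
      hneg.inv_tendsto_atTop
    have hup : Tendsto (fun x : ℝ => -1 + (1 - x)⁻¹) atBot (𝓝 (-1)) := by
      simpa using tendsto_const_nhds.add h0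
    apply tendsto_of_tendsto_of_tendsto_of_le_of_le' tendsto_const_nhds hup
    · filter_upwards with x
      have h0 := rt_pos x
      rw [neg_le, ← neg_div]
      rw [div_le_one h0]
      have := abs_le_rt x
      have := neg_abs_le x
      linarith
    · filter_upwards [eventually_le_atBot (0:ℝ)] with x hx
      have h0 := rt_pos x
      have hx1 : (0:ℝ) < 1 - x := by linarith
      have hle : rt x ≤ 1 - x := by
        have h := Real.sqrt_le_sqrt (show x^2 + 1 ≤ (1-x)^2 by nlinarith)
        rw [Real.sqrt_sq (by linarith : (0:ℝ) ≤ 1 - x)] at h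
        exact h
      have e : -1 + (1-x)⁻¹ = x / (1-x) := by field_simp; ring
      rw [e, div_le_div_iff₀ h0 hx1]
      nlinarith
  have h2 : Tendsto Real.arccos (𝓝 (-1)) (𝓝 π) := by
    have := Real.continuous_arccos.tendsto (-1)
    rwa [Real.arccos_neg_one] at this
  exact h2.comp h1

end Core2


section Core3

variable {c : ℝ → ℝ}

lemma xG_top (hint : ∀ a b, IntervalIntegrable c volume a b) (hG0 : G c 0 = 0) :
    Tendsto (fun x : ℝ => x * G c (th x)) atTop (𝓝 0) := by
  have pipos := Real.pi_pos
  have hPc := psi_cont hint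
  have hVc : Continuous (fun t : ℝ => (Psi c (t + π/2) - Psi c ((0:ℝ) + π/2))
      + (Psi c (t - π/2) - Psi c ((0:ℝ) - π/2))) :=
    ((hPc.comp (continuous_id.add continuous_const)).sub continuous_const).add
      ((hPc.comp (continuous_id.sub continuous_const)).sub continuous_const)
  apply squeeze_zero_norm' (a := fun x : ℝ => (Psi c (th x + π/2) - Psi c ((0:ℝ) + π/2))
      + (Psi c (th x - π/2) - Psi c ((0:ℝ) - π/2)))
  · filter_upwards [eventually_ge_atTop (0:ℝ)] with x hx
    set θ := th x with hθ
    have hθ1 : 0 ≤ θ := th_nonneg x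
    have hθ2 : θ ≤ π/2 := th_le_half hx
    have hsin : Real.sin θ = 1 / rt x := sin_th x
    have hsin0 : 0 ≤ Real.sin θ := by rw [hsin]; have := rt_pos x; positivity
    have hGs := G_split hint 0 θ
    have hb1 : |∫ φ in ((0:ℝ) + π/2)..(θ + π/2), c φ * Real.cos φ|
        ≤ Real.sin θ * (Psi c (θ + π/2) - Psi c ((0:ℝ) + π/2)) := by
      apply boundLem hint Real.continuous_cos (by linarith)
      intro φ hφ
      have h1 : 0 ≤ φ - π/2 := by have := hφ.1; linarith
      have h2 : φ - π/2 ≤ θ := by have := hφ.2; linarith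
      have e : Real.cos φ = -Real.sin (φ - π/2) := by
        conv_lhs => rw [show φ = (φ - π/2) + π/2 by ring]
        rw [Real.cos_add_pi_div_two]
      rw [e, abs_neg]
      exact abs_sin_le_lo h1 h2 hθ2
    have hb2 : |∫ φ in ((0:ℝ) - π/2)..(θ - π/2), c φ * Real.cos φ|
        ≤ Real.sin θ * (Psi c (θ - π/2) - Psi c ((0:ℝ) - π/2)) := by
      apply boundLem hint Real.continuous_cos (by linarith)
      intro φ hφ
      have h1 : 0 ≤ φ + π/2 := by have := hφ.1; linarith
      have h2 : φ + π/2 ≤ θ := by have := hφ.2; linarith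
      have e : Real.cos φ = Real.sin (φ + π/2) := by
        conv_lhs => rw [show φ = (φ + π/2) - π/2 by ring]
        rw [Real.cos_sub_pi_div_two]
      rw [e]
      exact abs_sin_le_lo h1 h2 hθ2
    have hxsin : x * Real.sin θ ≤ 1 := by
      rw [hsin, mul_one_div, div_le_one (rt_pos x)]; exact le_rt x
    have hT1 : 0 ≤ Psi c (θ + π/2) - Psi c ((0:ℝ) + π/2) := by
      have := psi_mono hint (show (0:ℝ) + π/2 ≤ θ + π/2 by linarith); linarith
    have hT2 : 0 ≤ Psi c (θ - π/2) - Psi c ((0:ℝ) - π/2) := by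
      have := psi_mono hint (show (0:ℝ) - π/2 ≤ θ - π/2 by linarith); linarith
    have hGabs : |G c θ| ≤ Real.sin θ * ((Psi c (θ + π/2) - Psi c ((0:ℝ) + π/2))
        + (Psi c (θ - π/2) - Psi c ((0:ℝ) - π/2))) := by
      rw [hGs, hG0, zero_add]
      have habs : |(∫ φ in ((0:ℝ) + π/2)..(θ + π/2), c φ * Real.cos φ)
          - ∫ φ in ((0:ℝ) - π/2)..(θ - π/2), c φ * Real.cos φ|
          ≤ |∫ φ in ((0:ℝ) + π/2)..(θ + π/2), c φ * Real.cos φ|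
            + |∫ φ in ((0:ℝ) - π/2)..(θ - π/2), c φ * Real.cos φ| := abs_sub _ _
      have := add_le_add hb1 hb2
      rw [← mul_add] at this
      linarith
    rw [Real.norm_eq_abs, abs_mul, abs_of_nonneg hx]
    calc x * |G c θ| ≤ x * (Real.sin θ * ((Psi c (θ + π/2) - Psi c ((0:ℝ) + π/2))
          + (Psi c (θ - π/2) - Psi c ((0:ℝ) - π/2)))) :=
        mul_le_mul_of_nonneg_left hGabs hx
    _ = (x * Real.sin θ) * ((Psi c (θ + π/2) - Psi c ((0:ℝ) + π/2))
          + (Psi c (θ - π/2) - Psi c ((0:ℝ) - π/2))) := by ring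
    _ ≤ 1 * ((Psi c (θ + π/2) - Psi c ((0:ℝ) + π/2))
          + (Psi c (θ - π/2) - Psi c ((0:ℝ) - π/2))) :=
        mul_le_mul_of_nonneg_right hxsin (by linarith)
    _ = _ := one_mul _
  · have hV0 : (fun t : ℝ => (Psi c (t + π/2) - Psi c ((0:ℝ) + π/2))
        + (Psi c (t - π/2) - Psi c ((0:ℝ) - π/2))) 0 = 0 := by simp
    exact (hVc.tendsto' 0 0 hV0).comp tendsto_th_top

lemma xG_bot (hint : ∀ a b, IntervalIntegrable c volume a b) (hGpi : G c π = 0) :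
    Tendsto (fun x : ℝ => x * G c (th x)) atBot (𝓝 0) := by
  have pipos := Real.pi_pos
  have hPc := psi_cont hint
  have hVc : Continuous (fun t : ℝ => (Psi c (π + π/2) - Psi c (t + π/2))
      + (Psi c (π - π/2) - Psi c (t - π/2))) :=
    (continuous_const.sub (hPc.comp (continuous_id.add continuous_const))).add
      (continuous_const.sub (hPc.comp (continuous_id.sub continuous_const)))
  apply squeeze_zero_norm' (a := fun x : ℝ => (Psi c (π + π/2) - Psi c (th x + π/2))
      + (Psi c (π - π/2) - Psi c (th x - π/2)))
  · filter_upwards [eventually_le_atBot (0:ℝ)] with x hx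
    set θ := th x with hθ
    have hθ1 : π/2 ≤ θ := half_le_th hx
    have hθ2 : θ ≤ π := th_le_pi x
    have hsin : Real.sin θ = 1 / rt x := sin_th x
    have hsin0 : 0 ≤ Real.sin θ := by rw [hsin]; have := rt_pos x; positivity
    have hGs := G_split hint π θ
    have hb1 : |∫ φ in (θ + π/2)..(π + π/2), c φ * Real.cos φ|
        ≤ Real.sin θ * (Psi c (π + π/2) - Psi c (θ + π/2)) := by
      apply boundLem hint Real.continuous_cos (by linarith)
      intro φ hφ
      have h1 : θ ≤ φ - π/2 := by have := hφ.1; linarith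
      have h2 : φ - π/2 ≤ π := by have := hφ.2; linarith
      have e : Real.cos φ = -Real.sin (φ - π/2) := by
        conv_lhs => rw [show φ = (φ - π/2) + π/2 by ring]
        rw [Real.cos_add_pi_div_two]
      rw [e, abs_neg]
      exact abs_sin_le_hi h1 h2 hθ1
    have hb2 : |∫ φ in (θ - π/2)..(π - π/2), c φ * Real.cos φ|
        ≤ Real.sin θ * (Psi c (π - π/2) - Psi c (θ - π/2)) := by
      apply boundLem hint Real.continuous_cos (by linarith)
      intro φ hφ
      have h1 : θ ≤ φ + π/2 := by have := hφ.1; linarith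
      have h2 : φ + π/2 ≤ π := by have := hφ.2; linarith
      have e : Real.cos φ = Real.sin (φ + π/2) := by
        conv_lhs => rw [show φ = (φ + π/2) - π/2 by ring]
        rw [Real.cos_sub_pi_div_two]
      rw [e]
      exact abs_sin_le_hi h1 h2 hθ1
    have hxsin : |x| * Real.sin θ ≤ 1 := by
      rw [hsin, mul_one_div, div_le_one (rt_pos x)]; exact abs_le_rt x
    have hT1 : 0 ≤ Psi c (π + π/2) - Psi c (θ + π/2) := by
      have := psi_mono hint (show θ + π/2 ≤ π + π/2 by linarith); linarith
    have hT2 : 0 ≤ Psi c (π - π/2) - Psi c (θ - π/2) := by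
      have := psi_mono hint (show θ - π/2 ≤ π - π/2 by linarith); linarith
    have hGabs : |G c θ| ≤ Real.sin θ * ((Psi c (π + π/2) - Psi c (θ + π/2))
        + (Psi c (π - π/2) - Psi c (θ - π/2))) := by
      rw [hGs, hGpi, zero_add]
      rw [intervalIntegral.integral_symm (θ + π/2) (π + π/2),
        intervalIntegral.integral_symm (θ - π/2) (π - π/2)]
      have habs : |-(∫ φ in (θ + π/2)..(π + π/2), c φ * Real.cos φ)
          - -(∫ φ in (θ - π/2)..(π - π/2), c φ * Real.cos φ)|
          ≤ |∫ φ in (θ + π/2)..(π + π/2), c φ * Real.cos φ|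
            + |∫ φ in (θ - π/2)..(π - π/2), c φ * Real.cos φ| := by
        have := abs_sub (-(∫ φ in (θ + π/2)..(π + π/2), c φ * Real.cos φ))
          (-(∫ φ in (θ - π/2)..(π - π/2), c φ * Real.cos φ))
        simpa [abs_neg] using this
      have := add_le_add hb1 hb2
      rw [← mul_add] at this
      linarith
    rw [Real.norm_eq_abs, abs_mul]
    calc |x| * |G c θ| ≤ |x| * (Real.sin θ * ((Psi c (π + π/2) - Psi c (θ + π/2))
          + (Psi c (π - π/2) - Psi c (θ - π/2)))) :=
        mul_le_mul_of_nonneg_left hGabs (abs_nonneg x)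
    _ = (|x| * Real.sin θ) * ((Psi c (π + π/2) - Psi c (θ + π/2))
          + (Psi c (π - π/2) - Psi c (θ - π/2))) := by ring
    _ ≤ 1 * ((Psi c (π + π/2) - Psi c (θ + π/2))
          + (Psi c (π - π/2) - Psi c (θ - π/2))) :=
        mul_le_mul_of_nonneg_right hxsin (by linarith)
    _ = _ := one_mul _
  · have hV0 : (fun t : ℝ => (Psi c (π + π/2) - Psi c (t + π/2))
        + (Psi c (π - π/2) - Psi c (t - π/2))) π = 0 := by simp
    exact (hVc.tendsto' π 0 hV0).comp tendsto_th_bot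

end Core3


section Core4

variable {c : ℝ → ℝ}

set_option maxHeartbeats 2000000 in
lemma hasDeriv (hint : ∀ a b, IntervalIntegrable c volume a b)
    (hper : Function.Periodic c (2 * π)) {f : ℝ → ℝ}
    (hf : ∀ x : ℝ, f x = ∫ φ in (0:ℝ)..(2 * π), c φ * max (x * Real.cos φ + Real.sin φ) 0)
    (x : ℝ) : HasDerivAt f (G c (th x)) x := by
  have pipos := Real.pi_pos
  set θ := th x with hθ
  set r := rt x with hr'
  have hr : 0 < r := rt_pos x
  have hcg : ∀ y : ℝ, Continuous (fun φ => max (y * Real.cos φ + Real.sin φ) 0) := fun y =>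
    ((continuous_const.mul Real.continuous_cos).add Real.continuous_sin).max continuous_const
  have hshift : ∀ y : ℝ, f y = ∫ φ in (θ - π/2)..((θ - π/2) + 2*π),
      c φ * max (y * Real.cos φ + Real.sin φ) 0 := fun y =>
    (hf y).trans (shiftRepr hint hper y (θ - π/2))
  rw [hasDerivAt_iff_isLittleO, Asymptotics.isLittleO_iff]
  intro ε hε
  obtain ⟨w, hw0, hwh, hwS⟩ : ∃ w : ℝ, 0 < w ∧ w ≤ π/2 ∧
      (Psi c (θ - π/2 + w) - Psi c (θ - π/2)) + (Psi c (θ + π/2) - Psi c (θ + π/2 - w))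
      + (Psi c (θ + π/2 + w) - Psi c (θ + π/2))
      + (Psi c (θ - π/2 + 2*π) - Psi c (θ - π/2 + 2*π - w)) ≤ ε/2 := by
    have hPc := psi_cont hint
    have hVc : Continuous (fun w : ℝ =>
        (Psi c (θ - π/2 + w) - Psi c (θ - π/2)) + (Psi c (θ + π/2) - Psi c (θ + π/2 - w))
        + (Psi c (θ + π/2 + w) - Psi c (θ + π/2))
        + (Psi c (θ - π/2 + 2*π) - Psi c (θ - π/2 + 2*π - w))) := by
      refine (((?_ : Continuous _).add ?_).add ?_).add ?_
      · exact (hPc.comp (continuous_const.add continuous_id)).sub continuous_const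
      · exact continuous_const.sub (hPc.comp (continuous_const.sub continuous_id))
      · exact (hPc.comp (continuous_const.add continuous_id)).sub continuous_const
      · exact continuous_const.sub (hPc.comp (continuous_const.sub continuous_id))
    have hV0 : (fun w : ℝ =>
        (Psi c (θ - π/2 + w) - Psi c (θ - π/2)) + (Psi c (θ + π/2) - Psi c (θ + π/2 - w))
        + (Psi c (θ + π/2 + w) - Psi c (θ + π/2))
        + (Psi c (θ - π/2 + 2*π) - Psi c (θ - π/2 + 2*π - w))) 0 = 0 := by norm_num
    have h1 := (hVc.tendsto' 0 0 hV0).eventually_lt_const (show (0:ℝ) < ε/2 by linarith)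
    have h2 : ∀ᶠ w in 𝓝 (0:ℝ), w < π/2 := eventually_lt_nhds (by linarith)
    have h3 := (h1.and h2).filter_mono (nhdsWithin_le_nhds (s := Set.Ioi (0:ℝ)))
    have h4 : ∀ᶠ w in 𝓝[>] (0:ℝ), 0 < w :=
      eventually_nhdsWithin_of_forall (fun w hw => hw)
    obtain ⟨w, ⟨hVw, hwpi⟩, hwpos⟩ := (h3.and h4).exists
    exact ⟨w, hwpos, hwpi.le, hVw.le⟩
  have hsinw : 0 < Real.sin w := Real.sin_pos_of_pos_of_lt_pi hw0 (by linarith)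
  have hrw : 0 < r * Real.sin w := mul_pos hr hsinw
  rw [Metric.eventually_nhds_iff]
  refine ⟨r * Real.sin w, hrw, fun y hy => ?_⟩
  have hyx : |y - x| ≤ r * Real.sin w := by
    rw [Real.dist_eq] at hy; exact hy.le
  have hdiff : ∀ φ : ℝ, |(y - x) * Real.cos φ| ≤ |y - x| := fun φ => by
    rw [abs_mul]
    exact mul_le_of_le_one_right (abs_nonneg _) (Real.abs_cos_le_one φ)
  -- integrability of the error integrands
  have intE1 : ∀ a b, IntervalIntegrable (fun φ => c φ *
      (max (y * Real.cos φ + Real.sin φ) 0 - max (x * Real.cos φ + Real.sin φ) 0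
        - (y - x) * Real.cos φ)) volume a b := by
    intro a b
    have e : (fun φ => c φ * (max (y * Real.cos φ + Real.sin φ) 0
        - max (x * Real.cos φ + Real.sin φ) 0 - (y - x) * Real.cos φ))
        = fun φ => (c φ * max (y * Real.cos φ + Real.sin φ) 0
          - c φ * max (x * Real.cos φ + Real.sin φ) 0) - (y - x) * (c φ * Real.cos φ) :=
      funext fun φ => by ring
    rw [e]
    exact ((intRelu hint y a b).sub (intRelu hint x a b)).sub
      ((intMul hint Real.continuous_cos a b).const_mul (y - x))
  have intE2 : ∀ a b, IntervalIntegrable (fun φ => c φ *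
      (max (y * Real.cos φ + Real.sin φ) 0 - max (x * Real.cos φ + Real.sin φ) 0))
      volume a b := by
    intro a b
    have e : (fun φ => c φ * (max (y * Real.cos φ + Real.sin φ) 0
        - max (x * Real.cos φ + Real.sin φ) 0))
        = fun φ => c φ * max (y * Real.cos φ + Real.sin φ) 0
          - c φ * max (x * Real.cos φ + Real.sin φ) 0 :=
      funext fun φ => by ring
    rw [e]
    exact (intRelu hint y a b).sub (intRelu hint x a b)
  -- decomposition
  have hE1int : (∫ φ in (θ - π/2)..(θ + π/2), c φ *
      (max (y * Real.cos φ + Real.sin φ) 0 - max (x * Real.cos φ + Real.sin φ) 0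
        - (y - x) * Real.cos φ))
      = (∫ φ in (θ - π/2)..(θ + π/2), c φ * max (y * Real.cos φ + Real.sin φ) 0)
        - (∫ φ in (θ - π/2)..(θ + π/2), c φ * max (x * Real.cos φ + Real.sin φ) 0)
        - (y - x) * ∫ φ in (θ - π/2)..(θ + π/2), c φ * Real.cos φ := by
    have e : (fun φ => c φ * (max (y * Real.cos φ + Real.sin φ) 0
        - max (x * Real.cos φ + Real.sin φ) 0 - (y - x) * Real.cos φ))
        = fun φ => (c φ * max (y * Real.cos φ + Real.sin φ) 0
          - c φ * max (x * Real.cos φ + Real.sin φ) 0) - (y - x) * (c φ * Real.cos φ) :=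
      funext fun φ => by ring
    rw [e, intervalIntegral.integral_sub
      ((intRelu hint y _ _).sub (intRelu hint x _ _))
      ((intMul hint Real.continuous_cos _ _).const_mul (y - x)),
      intervalIntegral.integral_sub (intRelu hint y _ _) (intRelu hint x _ _),
      intervalIntegral.integral_const_mul]
  have hE2int : (∫ φ in (θ + π/2)..(θ - π/2 + 2*π), c φ *
      (max (y * Real.cos φ + Real.sin φ) 0 - max (x * Real.cos φ + Real.sin φ) 0))
      = (∫ φ in (θ + π/2)..(θ - π/2 + 2*π), c φ * max (y * Real.cos φ + Real.sin φ) 0)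
        - ∫ φ in (θ + π/2)..(θ - π/2 + 2*π), c φ * max (x * Real.cos φ + Real.sin φ) 0 := by
    have e : (fun φ => c φ * (max (y * Real.cos φ + Real.sin φ) 0
        - max (x * Real.cos φ + Real.sin φ) 0))
        = fun φ => c φ * max (y * Real.cos φ + Real.sin φ) 0
          - c φ * max (x * Real.cos φ + Real.sin φ) 0 :=
      funext fun φ => by ring
    rw [e, intervalIntegral.integral_sub (intRelu hint y _ _) (intRelu hint x _ _)]
  have hsy := intervalIntegral.integral_add_adjacent_intervals
    (intRelu hint y (θ - π/2) (θ + π/2)) (intRelu hint y (θ + π/2) (θ - π/2 + 2*π))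
  have hsx := intervalIntegral.integral_add_adjacent_intervals
    (intRelu hint x (θ - π/2) (θ + π/2)) (intRelu hint x (θ + π/2) (θ - π/2 + 2*π))
  have hshifty := hshift y
  have hshiftx := hshift x
  rw [show θ - π/2 + 2*π = (θ - π/2) + 2*π from rfl] at hsy hsx
  have hA := intervalIntegral.integral_add_adjacent_intervals
    (intE1 (θ - π/2) (θ - π/2 + w)) (intE1 (θ - π/2 + w) (θ + π/2 - w))
  have hA' := intervalIntegral.integral_add_adjacent_intervals
    (intE1 (θ - π/2) (θ + π/2 - w)) (intE1 (θ + π/2 - w) (θ + π/2))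
  have hB := intervalIntegral.integral_add_adjacent_intervals
    (intE2 (θ + π/2) (θ + π/2 + w)) (intE2 (θ + π/2 + w) (θ - π/2 + 2*π - w))
  have hB' := intervalIntegral.integral_add_adjacent_intervals
    (intE2 (θ + π/2) (θ - π/2 + 2*π - w)) (intE2 (θ - π/2 + 2*π - w) (θ - π/2 + 2*π))
  -- middle pieces vanish
  have hM1 : (∫ φ in (θ - π/2 + w)..(θ + π/2 - w), c φ *
      (max (y * Real.cos φ + Real.sin φ) 0 - max (x * Real.cos φ + Real.sin φ) 0
        - (y - x) * Real.cos φ)) = 0 := by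
    have heq : EqOn (fun φ => c φ *
        (max (y * Real.cos φ + Real.sin φ) 0 - max (x * Real.cos φ + Real.sin φ) 0
          - (y - x) * Real.cos φ)) (fun _ => (0:ℝ))
        (Set.uIcc (θ - π/2 + w) (θ + π/2 - w)) := by
      intro φ hφ
      rw [Set.uIcc_of_le (by linarith)] at hφ
      have habs : |φ - θ| ≤ π/2 - w := abs_le.2 ⟨by linarith [hφ.1], by linarith [hφ.2]⟩
      have hcos : Real.sin w ≤ Real.cos (φ - θ) := by
        have h1 : Real.cos (π/2 - w) ≤ Real.cos |φ - θ| :=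
          Real.cos_le_cos_of_nonneg_of_le_pi (abs_nonneg _) (by linarith) habs
        rwa [Real.cos_pi_div_two_sub, Real.cos_abs] at h1
      have hxarg : r * Real.sin w ≤ x * Real.cos φ + Real.sin φ := by
        rw [keyid x φ, ← hθ, ← hr']
        exact mul_le_mul_of_nonneg_left hcos hr.le
      have hxpos : 0 ≤ x * Real.cos φ + Real.sin φ := le_trans hrw.le hxarg
      have hypos : 0 ≤ y * Real.cos φ + Real.sin φ := by
        have e : y * Real.cos φ + Real.sin φ
            = (x * Real.cos φ + Real.sin φ) + (y - x) * Real.cos φ := by ring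
        rw [e]
        have := neg_abs_le ((y - x) * Real.cos φ)
        have := hdiff φ
        linarith
      show c φ * (max (y * Real.cos φ + Real.sin φ) 0
        - max (x * Real.cos φ + Real.sin φ) 0 - (y - x) * Real.cos φ) = 0
      rw [max_eq_left hypos, max_eq_left hxpos]
      ring
    rw [intervalIntegral.integral_congr heq, intervalIntegral.integral_zero]
  have hM2 : (∫ φ in (θ + π/2 + w)..(θ - π/2 + 2*π - w), c φ *
      (max (y * Real.cos φ + Real.sin φ) 0 - max (x * Real.cos φ + Real.sin φ) 0)) = 0 := by
    have heq : EqOn (fun φ => c φ *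
        (max (y * Real.cos φ + Real.sin φ) 0 - max (x * Real.cos φ + Real.sin φ) 0))
        (fun _ => (0:ℝ)) (Set.uIcc (θ + π/2 + w) (θ - π/2 + 2*π - w)) := by
      intro φ hφ
      rw [Set.uIcc_of_le (by linarith)] at hφ
      have habs : |φ - θ - π| ≤ π/2 - w := abs_le.2 ⟨by linarith [hφ.1], by linarith [hφ.2]⟩
      have hcos : Real.cos (φ - θ) ≤ -Real.sin w := by
        have h1 : Real.cos (π/2 - w) ≤ Real.cos |φ - θ - π| :=
          Real.cos_le_cos_of_nonneg_of_le_pi (abs_nonneg _) (by linarith) habs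
        rw [Real.cos_pi_div_two_sub, Real.cos_abs] at h1
        have h2 := Real.cos_sub_pi (φ - θ)
        linarith
      have hxarg : x * Real.cos φ + Real.sin φ ≤ -(r * Real.sin w) := by
        rw [keyid x φ, ← hθ, ← hr']
        have := mul_le_mul_of_nonneg_left hcos hr.le
        nlinarith
      have hxneg : x * Real.cos φ + Real.sin φ ≤ 0 := le_trans hxarg (by linarith)
      have hyneg : y * Real.cos φ + Real.sin φ ≤ 0 := by
        have e : y * Real.cos φ + Real.sin φ
            = (x * Real.cos φ + Real.sin φ) + (y - x) * Real.cos φ := by ring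
        rw [e]
        have := le_abs_self ((y - x) * Real.cos φ)
        have := hdiff φ
        linarith
      show c φ * (max (y * Real.cos φ + Real.sin φ) 0
        - max (x * Real.cos φ + Real.sin φ) 0) = 0
      rw [max_eq_right hyneg, max_eq_right hxneg]
      ring
    rw [intervalIntegral.integral_congr heq, intervalIntegral.integral_zero]
  -- edge bounds
  have hedgebd1 : ∀ φ : ℝ, |max (y * Real.cos φ + Real.sin φ) 0
      - max (x * Real.cos φ + Real.sin φ) 0 - (y - x) * Real.cos φ| ≤ 2 * |y - x| := by
    intro φ
    have h1 : |max (y * Real.cos φ + Real.sin φ) 0 - max (x * Real.cos φ + Real.sin φ) 0|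
        ≤ |(y - x) * Real.cos φ| := by
      have := abs_max_sub_max_le_abs (y * Real.cos φ + Real.sin φ)
        (x * Real.cos φ + Real.sin φ) 0
      have e : y * Real.cos φ + Real.sin φ - (x * Real.cos φ + Real.sin φ)
          = (y - x) * Real.cos φ := by ring
      rwa [e] at this
    have h2 := hdiff φ
    have := abs_sub (max (y * Real.cos φ + Real.sin φ) 0
      - max (x * Real.cos φ + Real.sin φ) 0) ((y - x) * Real.cos φ)
    linarith
  have hedgebd2 : ∀ φ : ℝ, |max (y * Real.cos φ + Real.sin φ) 0
      - max (x * Real.cos φ + Real.sin φ) 0| ≤ 2 * |y - x| := by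
    intro φ
    have h1 : |max (y * Real.cos φ + Real.sin φ) 0 - max (x * Real.cos φ + Real.sin φ) 0|
        ≤ |(y - x) * Real.cos φ| := by
      have := abs_max_sub_max_le_abs (y * Real.cos φ + Real.sin φ)
        (x * Real.cos φ + Real.sin φ) 0
      have e : y * Real.cos φ + Real.sin φ - (x * Real.cos φ + Real.sin φ)
          = (y - x) * Real.cos φ := by ring
      rwa [e] at this
    have h2 := hdiff φ
    linarith [abs_nonneg (y - x)]
  have hcont1 : Continuous (fun φ => max (y * Real.cos φ + Real.sin φ) 0
      - max (x * Real.cos φ + Real.sin φ) 0 - (y - x) * Real.cos φ) :=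
    ((hcg y).sub (hcg x)).sub (continuous_const.mul Real.continuous_cos)
  have hcont2 : Continuous (fun φ => max (y * Real.cos φ + Real.sin φ) 0
      - max (x * Real.cos φ + Real.sin φ) 0) := (hcg y).sub (hcg x)
  have hb1 := boundLem hint hcont1 (show θ - π/2 ≤ θ - π/2 + w by linarith)
    (fun φ _ => hedgebd1 φ)
  have hb2 := boundLem hint hcont1 (show θ + π/2 - w ≤ θ + π/2 by linarith)
    (fun φ _ => hedgebd1 φ)
  have hb3 := boundLem hint hcont2 (show θ + π/2 ≤ θ + π/2 + w by linarith)
    (fun φ _ => hedgebd2 φ)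
  have hb4 := boundLem hint hcont2 (show θ - π/2 + 2*π - w ≤ θ - π/2 + 2*π by linarith)
    (fun φ _ => hedgebd2 φ)
  -- assemble
  rw [Real.norm_eq_abs, Real.norm_eq_abs, smul_eq_mul]
  have hdecomp : f y - f x - (y - x) * G c θ
      = ((∫ φ in (θ - π/2)..(θ - π/2 + w), c φ *
          (max (y * Real.cos φ + Real.sin φ) 0 - max (x * Real.cos φ + Real.sin φ) 0
            - (y - x) * Real.cos φ))
        + (∫ φ in (θ + π/2 - w)..(θ + π/2), c φ *
          (max (y * Real.cos φ + Real.sin φ) 0 - max (x * Real.cos φ + Real.sin φ) 0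
            - (y - x) * Real.cos φ)))
      + ((∫ φ in (θ + π/2)..(θ + π/2 + w), c φ *
          (max (y * Real.cos φ + Real.sin φ) 0 - max (x * Real.cos φ + Real.sin φ) 0))
        + (∫ φ in (θ - π/2 + 2*π - w)..(θ - π/2 + 2*π), c φ *
          (max (y * Real.cos φ + Real.sin φ) 0 - max (x * Real.cos φ + Real.sin φ) 0))) := by
    have hGdef : G c θ = ∫ φ in (θ - π/2)..(θ + π/2), c φ * Real.cos φ := rfl
    rw [hshifty, hshiftx, hGdef]
    have e1 : (∫ φ in (θ - π/2)..(θ + π/2), c φ *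
        (max (y * Real.cos φ + Real.sin φ) 0 - max (x * Real.cos φ + Real.sin φ) 0
          - (y - x) * Real.cos φ))
        = (∫ φ in (θ - π/2)..(θ - π/2 + w), c φ *
            (max (y * Real.cos φ + Real.sin φ) 0 - max (x * Real.cos φ + Real.sin φ) 0
              - (y - x) * Real.cos φ))
          + (∫ φ in (θ + π/2 - w)..(θ + π/2), c φ *
            (max (y * Real.cos φ + Real.sin φ) 0 - max (x * Real.cos φ + Real.sin φ) 0
              - (y - x) * Real.cos φ)) := by
      rw [← hA', ← hA, hM1]; ring
    have e2 : (∫ φ in (θ + π/2)..(θ - π/2 + 2*π), c φ *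
        (max (y * Real.cos φ + Real.sin φ) 0 - max (x * Real.cos φ + Real.sin φ) 0))
        = (∫ φ in (θ + π/2)..(θ + π/2 + w), c φ *
            (max (y * Real.cos φ + Real.sin φ) 0 - max (x * Real.cos φ + Real.sin φ) 0))
          + (∫ φ in (θ - π/2 + 2*π - w)..(θ - π/2 + 2*π), c φ *
            (max (y * Real.cos φ + Real.sin φ) 0
              - max (x * Real.cos φ + Real.sin φ) 0)) := by
      rw [← hB', ← hB, hM2]; ring
    rw [← e1, ← e2, hE1int, hE2int]
    rw [← hsy, ← hsx]
    ring
  rw [hdecomp]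
  have habs4 : |((∫ φ in (θ - π/2)..(θ - π/2 + w), c φ *
          (max (y * Real.cos φ + Real.sin φ) 0 - max (x * Real.cos φ + Real.sin φ) 0
            - (y - x) * Real.cos φ))
        + (∫ φ in (θ + π/2 - w)..(θ + π/2), c φ *
          (max (y * Real.cos φ + Real.sin φ) 0 - max (x * Real.cos φ + Real.sin φ) 0
            - (y - x) * Real.cos φ)))
      + ((∫ φ in (θ + π/2)..(θ + π/2 + w), c φ *
          (max (y * Real.cos φ + Real.sin φ) 0 - max (x * Real.cos φ + Real.sin φ) 0))
        + (∫ φ in (θ - π/2 + 2*π - w)..(θ - π/2 + 2*π), c φ *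
          (max (y * Real.cos φ + Real.sin φ) 0 - max (x * Real.cos φ + Real.sin φ) 0)))|
      ≤ (2 * |y - x|) * ((Psi c (θ - π/2 + w) - Psi c (θ - π/2))
        + (Psi c (θ + π/2) - Psi c (θ + π/2 - w))
        + (Psi c (θ + π/2 + w) - Psi c (θ + π/2))
        + (Psi c (θ - π/2 + 2*π) - Psi c (θ - π/2 + 2*π - w))) := by
    have t1 := abs_add_le ((∫ φ in (θ - π/2)..(θ - π/2 + w), c φ *
          (max (y * Real.cos φ + Real.sin φ) 0 - max (x * Real.cos φ + Real.sin φ) 0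
            - (y - x) * Real.cos φ))
        + (∫ φ in (θ + π/2 - w)..(θ + π/2), c φ *
          (max (y * Real.cos φ + Real.sin φ) 0 - max (x * Real.cos φ + Real.sin φ) 0
            - (y - x) * Real.cos φ)))
      ((∫ φ in (θ + π/2)..(θ + π/2 + w), c φ *
          (max (y * Real.cos φ + Real.sin φ) 0 - max (x * Real.cos φ + Real.sin φ) 0))
        + (∫ φ in (θ - π/2 + 2*π - w)..(θ - π/2 + 2*π), c φ *
          (max (y * Real.cos φ + Real.sin φ) 0 - max (x * Real.cos φ + Real.sin φ) 0)))
    have t2 := abs_add_le (∫ φ in (θ - π/2)..(θ - π/2 + w), c φ *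
          (max (y * Real.cos φ + Real.sin φ) 0 - max (x * Real.cos φ + Real.sin φ) 0
            - (y - x) * Real.cos φ))
        (∫ φ in (θ + π/2 - w)..(θ + π/2), c φ *
          (max (y * Real.cos φ + Real.sin φ) 0 - max (x * Real.cos φ + Real.sin φ) 0
            - (y - x) * Real.cos φ))
    have t3 := abs_add_le (∫ φ in (θ + π/2)..(θ + π/2 + w), c φ *
          (max (y * Real.cos φ + Real.sin φ) 0 - max (x * Real.cos φ + Real.sin φ) 0))
        (∫ φ in (θ - π/2 + 2*π - w)..(θ - π/2 + 2*π), c φ *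
          (max (y * Real.cos φ + Real.sin φ) 0 - max (x * Real.cos φ + Real.sin φ) 0))
    nlinarith [hb1, hb2, hb3, hb4]
  refine habs4.trans ?_
  have h2yx : 0 ≤ 2 * |y - x| := by positivity
  calc (2 * |y - x|) * ((Psi c (θ - π/2 + w) - Psi c (θ - π/2))
        + (Psi c (θ + π/2) - Psi c (θ + π/2 - w))
        + (Psi c (θ + π/2 + w) - Psi c (θ + π/2))
        + (Psi c (θ - π/2 + 2*π) - Psi c (θ - π/2 + 2*π - w)))
      ≤ (2 * |y - x|) * (ε/2) := mul_le_mul_of_nonneg_left hwS h2yx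
  _ = ε * |y - x| := by ring

end Core4

end Stmt12

/-- If `c ∈ L¹[0,2π]` (extended `2π`-periodically) satisfies the four
orthogonality conditions and `f(x) = ∫₀^{2π} c(φ) σ(x cos φ + sin φ) dφ`, then
`f(x) → 0` as `x → ±∞`, `f` is differentiable everywhere, and `x f'(x) → 0` as `x → ±∞`. -/
theorem statement12 (c : ℝ → ℝ)
    (hper : Function.Periodic c (2 * Real.pi))
    (hc : IntervalIntegrable c volume 0 (2 * Real.pi))
    (h1 : ∫ φ in (-(Real.pi/2))..(Real.pi/2), c φ * Real.cos φ = 0)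
    (h2 : ∫ φ in (-(Real.pi/2))..(Real.pi/2), c (φ + Real.pi) * Real.cos φ = 0)
    (h3 : ∫ φ in (-(Real.pi/2))..(Real.pi/2), c φ * Real.sin φ = 0)
    (h4 : ∫ φ in (-(Real.pi/2))..(Real.pi/2), c (φ + Real.pi) * Real.sin φ = 0)
    (f : ℝ → ℝ)
    (hf : ∀ x : ℝ, f x =
      ∫ φ in (0:ℝ)..(2 * Real.pi), c φ * max (x * Real.cos φ + Real.sin φ) 0) :
    Filter.Tendsto f Filter.atTop (nhds 0) ∧
    Filter.Tendsto f Filter.atBot (nhds 0) ∧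
    (∀ x : ℝ, DifferentiableAt ℝ f x) ∧
    Filter.Tendsto (fun x : ℝ => x * deriv f x) Filter.atTop (nhds 0) ∧
    Filter.Tendsto (fun x : ℝ => x * deriv f x) Filter.atBot (nhds 0) := by
  have hint := Stmt12.intAll hper hc
  have hG0 := Stmt12.G_zero h1
  have hGpi := Stmt12.G_pi h2
  have hH0 := Stmt12.H_zero h3
  have hHpi := Stmt12.H_pi h4
  have hder : ∀ x : ℝ, HasDerivAt f (Stmt12.G c (Stmt12.th x)) x :=
    Stmt12.hasDeriv hint hper hf
  have hrep : ∀ x : ℝ, f x = x * Stmt12.G c (Stmt12.th x) + Stmt12.H c (Stmt12.th x) :=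
    fun x => (hf x).trans (Stmt12.fRepr hint hper x)
  have hHtop : Filter.Tendsto (fun x : ℝ => Stmt12.H c (Stmt12.th x)) Filter.atTop (nhds 0) :=
    ((Stmt12.H_cont hint).tendsto' 0 0 hH0).comp Stmt12.tendsto_th_top
  have hHbot : Filter.Tendsto (fun x : ℝ => Stmt12.H c (Stmt12.th x)) Filter.atBot (nhds 0) :=
    ((Stmt12.H_cont hint).tendsto' Real.pi 0 hHpi).comp Stmt12.tendsto_th_bot
  have hxGtop := Stmt12.xG_top hint hG0
  have hxGbot := Stmt12.xG_bot hint hGpi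
  have hxderiv : (fun x : ℝ => x * deriv f x)
      = fun x : ℝ => x * Stmt12.G c (Stmt12.th x) :=
    funext fun x => by rw [(hder x).deriv]
  refine ⟨?_, ?_, fun x => (hder x).differentiableAt, ?_, ?_⟩
  · have h := hxGtop.add hHtop
    rw [add_zero] at h
    exact h.congr fun x => (hrep x).symm
  · have h := hxGbot.add hHbot
    rw [add_zero] at h
    exact h.congr fun x => (hrep x).symm
  · rw [hxderiv]; exact hxGtop
  · rw [hxderiv]; exact hxGbot
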